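/- Let C ⊆ R^N be a nonempty closed convex cone and C* its polar cone. Then w(C ∩ B₂^N)² + w(C* ∩ B₂^N)² ≤ N, where w(S) = E sup_{x∈S} ⟨Y, x⟩ is the Gaussian width with Y a standard Gaussian vector in R^N and B₂^N the unit Euclidean ball. -/

import Mathlib

open MeasureTheory ProbabilityTheory Real Set

section aux

variable {N : ℕ}

lemma rpow_two' (x : ℝ) : x ^ (2:ℝ) = x ^ 2 := by
  rw [show (2:ℝ) = ((2:ℕ):ℝ) by norm_num, Real.rpow_natCast]

lemma integ_sq_gauss_kernel :
    ∫ x : ℝ, x ^ 2 * rexp (-(1/2) * x ^ 2) = Real.sqrt (2 * π) := by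
  have hint : Integrable (fun x : ℝ => x ^ 2 * rexp (-(1/2) * x ^ 2)) := by
    have := integrable_rpow_mul_exp_neg_mul_sq (by norm_num : (0:ℝ) < 1/2)
      (by norm_num : (-1:ℝ) < 2)
    simpa [rpow_two'] using this
  have hIoi : ∫ x in Ioi (0:ℝ), x ^ 2 * rexp (-(1/2) * x ^ 2)
      = Real.sqrt (2 * π) / 2 := by
    have h := integral_rpow_mul_exp_neg_mul_rpow (p := 2) (q := 2) (b := 1/2)
      (by norm_num) (by norm_num) (by norm_num)
    have heq : ∫ x in Ioi (0:ℝ), x ^ (2:ℝ) * rexp (-(1/2) * x ^ (2:ℝ))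
        = ∫ x in Ioi (0:ℝ), x ^ 2 * rexp (-(1/2) * x ^ 2) := by
      simp [rpow_two']
    rw [heq] at h
    rw [h]
    have h32 : Real.Gamma ((2+1)/2) = Real.sqrt π / 2 := by
      rw [show ((2+1)/2:ℝ) = 1/2 + 1 by norm_num, Real.Gamma_add_one (by norm_num),
        Real.Gamma_one_half_eq]; ring
    have hb : ((1:ℝ)/2) ^ (-(2+1)/2 : ℝ) = 2 * Real.sqrt 2 := by
      rw [show ((1:ℝ)/2) = 2⁻¹ by norm_num, ← Real.rpow_neg_one (2:ℝ),
        ← Real.rpow_mul (by norm_num)]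
      rw [show (-1 * (-(2+1)/2) : ℝ) = 1 + 1/2 by norm_num,
        Real.rpow_add (by norm_num), Real.rpow_one, ← Real.sqrt_eq_rpow]
    rw [h32, hb, Real.sqrt_mul (by norm_num)]
    ring
  have hIic : ∫ x in Iic (0:ℝ), x ^ 2 * rexp (-(1/2) * x ^ 2)
      = Real.sqrt (2 * π) / 2 := by
    rw [← show -(0:ℝ) = 0 by ring, ← integral_comp_neg_Ioi]
    simpa using hIoi
  rw [← intervalIntegral.integral_Iic_add_Ioi hint.integrableOn hint.integrableOn, hIic, hIoi]
  ring

lemma integ_sq_gaussian : ∫ x : ℝ, x ^ 2 ∂(gaussianReal 0 1) = 1 := by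
  rw [gaussianReal_of_var_ne_zero _ one_ne_zero, gaussianPDF_def]
  have hmeas : Measurable fun x => (gaussianPDFReal 0 1 x).toNNReal :=
    (measurable_gaussianPDFReal 0 1).real_toNNReal
  have : (fun x => ENNReal.ofReal (gaussianPDFReal 0 1 x))
      = fun x => ((gaussianPDFReal 0 1 x).toNNReal : ENNReal) := rfl
  rw [this, integral_withDensity_eq_integral_smul hmeas]
  have : ∀ x : ℝ, (gaussianPDFReal 0 1 x).toNNReal • (x ^ 2)
      = (Real.sqrt (2 * π))⁻¹ * (x ^ 2 * rexp (-(1/2) * x ^ 2)) := by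
    intro x
    rw [NNReal.smul_def, Real.coe_toNNReal _ (gaussianPDFReal_nonneg 0 1 x)]
    rw [gaussianPDFReal, smul_eq_mul]
    push_cast
    rw [mul_one]
    ring_nf
  simp_rw [this]
  rw [integral_const_mul, integ_sq_gauss_kernel,
    inv_mul_cancel₀ (by positivity : Real.sqrt (2*π) ≠ 0)]

lemma integrable_sq_gaussian : Integrable (fun x : ℝ => x ^ 2) (gaussianReal 0 1) := by
  rw [gaussianReal_of_var_ne_zero _ one_ne_zero, gaussianPDF_def]
  have hmeas : Measurable fun x => (gaussianPDFReal 0 1 x).toNNReal :=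
    (measurable_gaussianPDFReal 0 1).real_toNNReal
  have h : (fun x => ENNReal.ofReal (gaussianPDFReal 0 1 x))
      = fun x => ((gaussianPDFReal 0 1 x).toNNReal : ENNReal) := rfl
  rw [h, integrable_withDensity_iff_integrable_smul hmeas]
  have h2 : ∀ x : ℝ, (gaussianPDFReal 0 1 x).toNNReal • (x ^ 2)
      = (Real.sqrt (2 * π))⁻¹ * (x ^ 2 * rexp (-(1/2) * x ^ 2)) := by
    intro x
    rw [NNReal.smul_def, Real.coe_toNNReal _ (gaussianPDFReal_nonneg 0 1 x),
      gaussianPDFReal, smul_eq_mul]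
    push_cast
    rw [mul_one]
    ring_nf
  simp_rw [h2]
  have hint : Integrable (fun x : ℝ => x ^ 2 * rexp (-(1/2) * x ^ 2)) := by
    have := integrable_rpow_mul_exp_neg_mul_sq (by norm_num : (0:ℝ) < 1/2)
      (by norm_num : (-1:ℝ) < 2)
    have e : ∀ x:ℝ, x ^ (2:ℝ) = x ^ 2 := fun x => by
      rw [show (2:ℝ) = ((2:ℕ):ℝ) by norm_num, Real.rpow_natCast]
    simpa [e] using this
  exact hint.const_mul _

lemma map_eval_pi {N : ℕ} (i : Fin N) :
    (Measure.pi fun _ : Fin N => gaussianReal 0 1).map (fun y => y i)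
      = gaussianReal 0 1 := by
  ext s hs
  rw [Measure.map_apply (measurable_pi_apply i) hs]
  have h : (fun y : Fin N → ℝ => y i) ⁻¹' s
      = Set.pi Set.univ (Function.update (fun _ : Fin N => (Set.univ : Set ℝ)) i s) :=
    Set.eval_preimage
  rw [h, Measure.pi_pi]
  rw [Fintype.prod_eq_single i (fun j hj => by simp [Function.update_of_ne hj])]
  simp

lemma measurePreserving_eval_pi {N : ℕ} (i : Fin N) :
    MeasurePreserving (fun y : Fin N → ℝ => y i)
      (Measure.pi fun _ : Fin N => gaussianReal 0 1) (gaussianReal 0 1) :=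
  ⟨measurable_pi_apply i, map_eval_pi i⟩

lemma integrable_coord_sq {N : ℕ} (i : Fin N) :
    Integrable (fun y : Fin N → ℝ => (y i) ^ 2)
      (Measure.pi fun _ : Fin N => gaussianReal 0 1) :=
  ((measurePreserving_eval_pi i).integrable_comp
    integrable_sq_gaussian.aestronglyMeasurable).mpr integrable_sq_gaussian

lemma integ_coord_sq {N : ℕ} (i : Fin N) :
    ∫ y : Fin N → ℝ, (y i) ^ 2 ∂(Measure.pi fun _ : Fin N => gaussianReal 0 1) = 1 := by
  have hm : AEStronglyMeasurable (fun x : ℝ => x ^ 2)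
      ((Measure.pi fun _ : Fin N => gaussianReal 0 1).map (fun y => y i)) := by
    rw [map_eval_pi i]; exact integrable_sq_gaussian.aestronglyMeasurable
  calc ∫ y : Fin N → ℝ, (y i) ^ 2 ∂(Measure.pi fun _ : Fin N => gaussianReal 0 1)
      = ∫ x : ℝ, x ^ 2
          ∂((Measure.pi fun _ : Fin N => gaussianReal 0 1).map (fun y => y i)) :=
        (integral_map (φ := fun y : Fin N → ℝ => y i) (f := fun x : ℝ => x ^ 2) (measurable_pi_apply i).aemeasurable hm).symm
    _ = 1 := by rw [map_eval_pi i]; exact integ_sq_gaussian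

lemma integrable_sum_sq {N : ℕ} :
    Integrable (fun y : Fin N → ℝ => ∑ i, (y i) ^ 2)
      (Measure.pi fun _ : Fin N => gaussianReal 0 1) :=
  integrable_finset_sum _ (fun i _ => integrable_coord_sq i)

lemma integ_sum_sq {N : ℕ} :
    ∫ y : Fin N → ℝ, ∑ i, (y i) ^ 2 ∂(Measure.pi fun _ : Fin N => gaussianReal 0 1)
      = (N : ℝ) := by
  rw [integral_finset_sum _ (fun i _ => integrable_coord_sq i)]
  simp [integ_coord_sq]

-- zero mem cone
lemma zero_mem_cone {C : Set (EuclideanSpace ℝ (Fin N))} (hne : C.Nonempty)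
    (hcl : IsClosed C) (hcone : ∀ (c : ℝ), 0 < c → ∀ x ∈ C, c • x ∈ C) :
    (0 : EuclideanSpace ℝ (Fin N)) ∈ C := by
  obtain ⟨x₀, hx₀⟩ := hne
  have hmem : ∀ n : ℕ, ((1 : ℝ)/(n+1)) • x₀ ∈ C := fun n =>
    hcone _ (by positivity) _ hx₀
  have hlim : Filter.Tendsto (fun n : ℕ => ((1 : ℝ)/(n+1)) • x₀)
      Filter.atTop (nhds 0) := by
    have := tendsto_one_div_add_atTop_nhds_zero_nat (𝕜 := ℝ)
    simpa using this.smul_const x₀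
  exact hcl.mem_of_tendsto hlim (Filter.Eventually.of_forall hmem)

lemma cone_add_mem {C : Set (EuclideanSpace ℝ (Fin N))} (hconv : Convex ℝ C)
    (hcone : ∀ (c : ℝ), 0 < c → ∀ x ∈ C, c • x ∈ C)
    {a b : EuclideanSpace ℝ (Fin N)} (ha : a ∈ C) (hb : b ∈ C) : a + b ∈ C := by
  have hmid : (1/2 : ℝ) • a + (1/2 : ℝ) • b ∈ C :=
    hconv ha hb (by norm_num) (by norm_num) (by norm_num)
  have := hcone 2 (by norm_num) _ hmid
  simpa [smul_add, smul_smul] using this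

/-- Projection onto a closed convex cone: existence with Moreau properties. -/
lemma exists_proj_cone {C : Set (EuclideanSpace ℝ (Fin N))} (hne : C.Nonempty)
    (hcl : IsClosed C) (hconv : Convex ℝ C)
    (hcone : ∀ (c : ℝ), 0 < c → ∀ x ∈ C, c • x ∈ C)
    (y : EuclideanSpace ℝ (Fin N)) :
    ∃ p ∈ C, (@inner ℝ _ _ (y - p) p = 0) ∧ ∀ x ∈ C, @inner ℝ _ _ (y - p) x ≤ 0 := by
  obtain ⟨p, hpC, hpmin⟩ := exists_norm_eq_iInf_of_complete_convex hne
    hcl.isComplete hconv y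
  have hchar := (norm_eq_iInf_iff_real_inner_le_zero hconv hpC).mp hpmin
  refine ⟨p, hpC, ?_, ?_⟩
  · have h1 : @inner ℝ _ _ (y - p) p ≤ 0 := by
      have := hchar ((2:ℝ) • p) (hcone 2 (by norm_num) p hpC)
      have h2 : (2:ℝ) • p - p = p := by
        rw [two_smul]; abel
      rwa [h2] at this
    have h2 : 0 ≤ @inner ℝ _ _ (y - p) p := by
      have := hchar ((1/2 : ℝ) • p) (hcone _ (by norm_num) p hpC)
      have h3 : (1/2:ℝ) • p - p = -((1/2:ℝ) • p) := by
        rw [show p = (1:ℝ) • p by rw [one_smul], smul_smul, ← sub_smul, ← neg_smul]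
        norm_num
      rw [h3, inner_neg_right] at this
      have := neg_nonpos.mp this
      linarith [real_inner_smul_right (y - p) p (1/2 : ℝ), this]
    linarith
  · intro x hx
    have hmem : p + x ∈ C := cone_add_mem hconv hcone hpC hx
    have := hchar (p + x) hmem
    simpa using this

/-- value of the sup functional -/
noncomputable def wfun (S : Set (EuclideanSpace ℝ (Fin N)))
    (z : EuclideanSpace ℝ (Fin N)) : ℝ :=
  sSup ((fun x : EuclideanSpace ℝ (Fin N) => @inner ℝ _ _ z x) '' S)

lemma wfun_bddAbove {S : Set (EuclideanSpace ℝ (Fin N))}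
    (hB : S ⊆ Metric.closedBall 0 1) (z : EuclideanSpace ℝ (Fin N)) :
    BddAbove ((fun x : EuclideanSpace ℝ (Fin N) => @inner ℝ _ _ z x) '' S) := by
  refine ⟨‖z‖, ?_⟩
  rintro _ ⟨x, hx, rfl⟩
  have h1 : ‖x‖ ≤ 1 := mem_closedBall_zero_iff.mp (hB hx)
  calc @inner ℝ _ _ z x ≤ ‖z‖ * ‖x‖ := real_inner_le_norm z x
    _ ≤ ‖z‖ := mul_le_of_le_one_right (norm_nonneg z) h1

lemma wfun_nonneg {S : Set (EuclideanSpace ℝ (Fin N))} (h0 : (0:EuclideanSpace ℝ (Fin N)) ∈ S)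
    (hB : S ⊆ Metric.closedBall 0 1) (z : EuclideanSpace ℝ (Fin N)) :
    0 ≤ wfun S z := by
  have : (0:ℝ) ∈ (fun x : EuclideanSpace ℝ (Fin N) => @inner ℝ _ _ z x) '' S :=
    ⟨0, h0, by simp⟩
  exact le_csSup (wfun_bddAbove hB z) this

lemma wfun_le {S : Set (EuclideanSpace ℝ (Fin N))} (h0 : (0:EuclideanSpace ℝ (Fin N)) ∈ S)
    {z : EuclideanSpace ℝ (Fin N)} {b : ℝ}
    (h : ∀ x ∈ S, @inner ℝ _ _ z x ≤ b) : wfun S z ≤ b :=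
  csSup_le ⟨@inner ℝ _ _ z 0, ⟨0, h0, rfl⟩⟩ (by rintro _ ⟨x, hx, rfl⟩; exact h x hx)

lemma wfun_le_norm {S : Set (EuclideanSpace ℝ (Fin N))} (h0 : (0:EuclideanSpace ℝ (Fin N)) ∈ S)
    (hB : S ⊆ Metric.closedBall 0 1) (z : EuclideanSpace ℝ (Fin N)) :
    wfun S z ≤ ‖z‖ := by
  refine wfun_le h0 fun x hx => ?_
  have h1 : ‖x‖ ≤ 1 := mem_closedBall_zero_iff.mp (hB hx)
  calc @inner ℝ _ _ z x ≤ ‖z‖ * ‖x‖ := real_inner_le_norm z x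
    _ ≤ ‖z‖ := mul_le_of_le_one_right (norm_nonneg z) h1

lemma wfun_lipschitz {S : Set (EuclideanSpace ℝ (Fin N))}
    (h0 : (0:EuclideanSpace ℝ (Fin N)) ∈ S) (hB : S ⊆ Metric.closedBall 0 1) :
    LipschitzWith 1 (wfun S) := by
  apply LipschitzWith.of_dist_le_mul
  intro z z'
  rw [Real.dist_eq, NNReal.coe_one, one_mul, dist_eq_norm]
  have key : ∀ a b : EuclideanSpace ℝ (Fin N), wfun S a ≤ wfun S b + ‖a - b‖ := by
    intro a b
    refine wfun_le h0 fun x hx => ?_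
    have h1 : ‖x‖ ≤ 1 := mem_closedBall_zero_iff.mp (hB hx)
    have h2 : @inner ℝ _ _ b x ≤ wfun S b := le_csSup (wfun_bddAbove hB b) ⟨x, hx, rfl⟩
    have h3 : @inner ℝ _ _ a x = @inner ℝ _ _ b x + @inner ℝ _ _ (a - b) x := by
      rw [← inner_add_left]; norm_num
    have h4 : @inner ℝ _ _ (a - b) x ≤ ‖a - b‖ :=
      le_trans (real_inner_le_norm _ _) (mul_le_of_le_one_right (norm_nonneg _) h1)
    linarith
  have k1 := key z z'
  have k2 := key z' z
  rw [abs_le]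
  constructor
  · have : ‖z' - z‖ = ‖z - z'‖ := by rw [← neg_sub, norm_neg]
    linarith [this ▸ k2]
  · linarith

lemma wfun_continuous {S : Set (EuclideanSpace ℝ (Fin N))}
    (h0 : (0:EuclideanSpace ℝ (Fin N)) ∈ S) (hB : S ⊆ Metric.closedBall 0 1) :
    Continuous (fun y : Fin N → ℝ => wfun S ((WithLp.equiv 2 (Fin N → ℝ)).symm y)) :=
  (wfun_lipschitz h0 hB).continuous.comp (PiLp.continuous_toLp (p := 2) (β := fun _ : Fin N => ℝ))

lemma inner_toE (y : Fin N → ℝ) (x : EuclideanSpace ℝ (Fin N)) :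
    @inner ℝ _ _ ((WithLp.equiv 2 (Fin N → ℝ)).symm y) x = ∑ i, y i * x i := by
  rw [PiLp.inner_apply]
  simp [RCLike.inner_apply]
  exact Finset.sum_congr rfl fun i _ => mul_comm _ _

lemma norm_toE_sq (y : Fin N → ℝ) :
    ‖(WithLp.equiv 2 (Fin N → ℝ)).symm y‖ ^ 2 = ∑ i, (y i) ^ 2 := by
  rw [EuclideanSpace.norm_eq, Real.sq_sqrt (by positivity)]
  simp [sq_abs]

end aux

/-- The Gaussian width of a set `S ⊆ ℝ^N`: `w(S) = E sup_{x ∈ S} ⟨Y, x⟩` where `Y` is a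
standard Gaussian vector (i.i.d. `N(0,1)` coordinates). -/
noncomputable def gaussianWidth {N : ℕ} (S : Set (EuclideanSpace ℝ (Fin N))) : ℝ :=
  ∫ y : Fin N → ℝ,
    sSup ((fun x : EuclideanSpace ℝ (Fin N) => ∑ i, y i * x i) '' S)
    ∂(Measure.pi fun _ : Fin N => gaussianReal 0 1)

theorem gaussianWidth_cone_sq_add_polar_sq_le (N : ℕ)
    (C : Set (EuclideanSpace ℝ (Fin N))) (hne : C.Nonempty) (hcl : IsClosed C)
    (hconv : Convex ℝ C) (hcone : ∀ (c : ℝ), 0 < c → ∀ x ∈ C, c • x ∈ C) :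
    gaussianWidth (C ∩ Metric.closedBall 0 1) ^ 2 +
      gaussianWidth ({x : EuclideanSpace ℝ (Fin N) |
          ∀ y ∈ C, @inner ℝ (EuclideanSpace ℝ (Fin N)) _ x y ≤ 0} ∩
        Metric.closedBall 0 1) ^ 2 ≤ (N : ℝ) := by
  classical
  set μ : Measure (Fin N → ℝ) := Measure.pi fun _ : Fin N => gaussianReal 0 1 with hμ
  haveI : IsProbabilityMeasure μ := by rw [hμ]; infer_instance
  set Cs : Set (EuclideanSpace ℝ (Fin N)) := {x : EuclideanSpace ℝ (Fin N) |
      ∀ y ∈ C, @inner ℝ (EuclideanSpace ℝ (Fin N)) _ x y ≤ 0} with hCs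
  set S₁ : Set (EuclideanSpace ℝ (Fin N)) := C ∩ Metric.closedBall 0 1 with hS₁
  set S₂ : Set (EuclideanSpace ℝ (Fin N)) := Cs ∩ Metric.closedBall 0 1 with hS₂
  have h0C : (0 : EuclideanSpace ℝ (Fin N)) ∈ C := zero_mem_cone hne hcl hcone
  have h0S₁ : (0 : EuclideanSpace ℝ (Fin N)) ∈ S₁ :=
    ⟨h0C, Metric.mem_closedBall_self zero_le_one⟩
  have h0S₂ : (0 : EuclideanSpace ℝ (Fin N)) ∈ S₂ :=
    ⟨fun y _ => by simp, Metric.mem_closedBall_self zero_le_one⟩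
  have hB₁ : S₁ ⊆ Metric.closedBall 0 1 := inter_subset_right
  have hB₂ : S₂ ⊆ Metric.closedBall 0 1 := inter_subset_right
  -- the two integrand functions
  set f : (Fin N → ℝ) → ℝ := fun y => wfun S₁ ((WithLp.equiv 2 (Fin N → ℝ)).symm y) with hf
  set g : (Fin N → ℝ) → ℝ := fun y => wfun S₂ ((WithLp.equiv 2 (Fin N → ℝ)).symm y) with hg
  have hwgen : ∀ S : Set (EuclideanSpace ℝ (Fin N)),
      gaussianWidth S = ∫ y, wfun S ((WithLp.equiv 2 (Fin N → ℝ)).symm y) ∂μ := by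
    intro S
    simp only [gaussianWidth, hμ, wfun]
    congr 1
    funext y
    simp only [inner_toE]
  have hw₁ : gaussianWidth S₁ = ∫ y, f y ∂μ := hwgen S₁
  have hw₂ : gaussianWidth S₂ = ∫ y, g y ∂μ := hwgen S₂
  -- pointwise bound
  have hpt : ∀ y : Fin N → ℝ, f y ^ 2 + g y ^ 2 ≤ ∑ i, (y i) ^ 2 := by
    intro y
    set z : EuclideanSpace ℝ (Fin N) := (WithLp.equiv 2 (Fin N → ℝ)).symm y with hz
    obtain ⟨p, hpC, hortho, hpolar⟩ := exists_proj_cone hne hcl hconv hcone z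
    have hfb : f y ≤ ‖p‖ := by
      refine wfun_le h0S₁ fun x hx => ?_
      have hx1 : ‖x‖ ≤ 1 := mem_closedBall_zero_iff.mp (hB₁ hx)
      have e : @inner ℝ _ _ z x = @inner ℝ _ _ p x + @inner ℝ _ _ (z - p) x := by
        rw [← inner_add_left]; norm_num
      have h1 : @inner ℝ _ _ (z - p) x ≤ 0 := hpolar x hx.1
      have h2 : @inner ℝ _ _ p x ≤ ‖p‖ :=
        le_trans (real_inner_le_norm _ _) (mul_le_of_le_one_right (norm_nonneg _) hx1)
      linarith
    have hgb : g y ≤ ‖z - p‖ := by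
      refine wfun_le h0S₂ fun v hv => ?_
      have hv1 : ‖v‖ ≤ 1 := mem_closedBall_zero_iff.mp (hB₂ hv)
      have e : @inner ℝ _ _ z v = @inner ℝ _ _ p v + @inner ℝ _ _ (z - p) v := by
        rw [← inner_add_left]; norm_num
      have h1 : @inner ℝ _ _ p v ≤ 0 := by
        rw [real_inner_comm]; exact hv.1 p hpC
      have h2 : @inner ℝ _ _ (z - p) v ≤ ‖z - p‖ :=
        le_trans (real_inner_le_norm _ _) (mul_le_of_le_one_right (norm_nonneg _) hv1)
      linarith
    have hfnn : 0 ≤ f y := wfun_nonneg h0S₁ hB₁ z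
    have hgnn : 0 ≤ g y := wfun_nonneg h0S₂ hB₂ z
    have hsq : f y ^ 2 + g y ^ 2 ≤ ‖p‖ ^ 2 + ‖z - p‖ ^ 2 :=
      add_le_add (pow_le_pow_left₀ hfnn hfb 2) (pow_le_pow_left₀ hgnn hgb 2)
    have hpyth : ‖p‖ ^ 2 + ‖z - p‖ ^ 2 = ‖z‖ ^ 2 := by
      have hps : p + (z - p) = z := by abel
      calc ‖p‖ ^ 2 + ‖z - p‖ ^ 2 = ‖p + (z - p)‖ ^ 2 := by
            rw [norm_add_sq_real, real_inner_comm, hortho]; ring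
        _ = ‖z‖ ^ 2 := by rw [hps]
    have hnz : ‖z‖ ^ 2 = ∑ i, (y i) ^ 2 := norm_toE_sq y
    linarith
  -- measurability and integrability
  have hfm : AEStronglyMeasurable f μ :=
    (wfun_continuous h0S₁ hB₁).aestronglyMeasurable
  have hgm : AEStronglyMeasurable g μ :=
    (wfun_continuous h0S₂ hB₂).aestronglyMeasurable
  have hbound : ∀ (h : (Fin N → ℝ) → ℝ), (∀ y, 0 ≤ h y) →
      (∀ y, h y ≤ ‖(WithLp.equiv 2 (Fin N → ℝ)).symm y‖) →
      AEStronglyMeasurable h μ → MemLp h 2 μ := by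
    intro h hnn hle hm
    rw [memLp_two_iff_integrable_sq hm]
    refine Integrable.mono (integrable_sum_sq (N := N)) (hm.pow 2) ?_
    refine Filter.Eventually.of_forall fun y => ?_
    rw [Real.norm_eq_abs, Real.norm_eq_abs, abs_of_nonneg (by positivity : (0:ℝ) ≤ ∑ i, (y i)^2),
      abs_of_nonneg (by positivity : (0:ℝ) ≤ h y ^ 2), ← norm_toE_sq y]
    exact pow_le_pow_left₀ (hnn y) (hle y) 2
  have hf2 : MemLp f 2 μ :=
    hbound f (fun y => wfun_nonneg h0S₁ hB₁ _) (fun y => wfun_le_norm h0S₁ hB₁ _) hfm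
  have hg2 : MemLp g 2 μ :=
    hbound g (fun y => wfun_nonneg h0S₂ hB₂ _) (fun y => wfun_le_norm h0S₂ hB₂ _) hgm
  have hfsq : Integrable (fun y => f y ^ 2) μ := (memLp_two_iff_integrable_sq hfm).mp hf2
  have hgsq : Integrable (fun y => g y ^ 2) μ := (memLp_two_iff_integrable_sq hgm).mp hg2
  -- Jensen: (∫ f)² ≤ ∫ f²
  have hjensen : ∀ (h : (Fin N → ℝ) → ℝ), MemLp h 2 μ →
      (∫ y, h y ∂μ) ^ 2 ≤ ∫ y, h y ^ 2 ∂μ := by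
    intro h h2
    have hv := ProbabilityTheory.variance_nonneg h μ
    rw [ProbabilityTheory.variance_eq_sub h2] at hv
    have : (∫ y, (h ^ 2) y ∂μ) = ∫ y, h y ^ 2 ∂μ := by
      congr 1
    linarith [this ▸ hv]
  have h1 := hjensen f hf2
  have h2 := hjensen g hg2
  -- sum of second moments
  have hsum : ∫ y, f y ^ 2 ∂μ + ∫ y, g y ^ 2 ∂μ ≤ (N : ℝ) := by
    rw [← integral_add hfsq hgsq, ← integ_sum_sq (N := N)]
    exact integral_mono (hfsq.add hgsq) (integrable_sum_sq (N := N)) hpt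
  rw [hw₁, hw₂]
  linarith
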